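/- For every graph G with chromatic number χ(G), the fixing number of G equals its χ(G)-fixing number: Fix(G) = Fix(χ(G), G). -/

import Mathlib

/-- A (possibly improper) `r`-coloring is proper if adjacent vertices get different colors. -/
def IsProperColoring {V : Type*} (G : SimpleGraph V) {r : ℕ} (φ : V → Fin r) : Prop :=
  ∀ ⦃u v : V⦄, G.Adj u v → φ u ≠ φ v

/-- The Hamming distance between two colorings. -/
noncomputable def colDist {V : Type*} {r : ℕ} (φ ψ : V → Fin r) : ℕ :=
  {v | φ v ≠ ψ v}.ncard


/-- `fixCost G φ` : minimum number of recolorings turning `φ` into a proper `r`-coloring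
(`⊤` if `G` has no proper `r`-coloring). -/
noncomputable def fixCost {V : Type*} (G : SimpleGraph V) {r : ℕ} (φ : V → Fin r) : ℕ∞ :=
  sInf {d : ℕ∞ | ∃ ψ : V → Fin r, IsProperColoring G ψ ∧ (colDist φ ψ : ℕ∞) = d}

/-- The `r`-fixing number of `G`. -/
noncomputable def fixNum {V : Type*} (G : SimpleGraph V) (r : ℕ) : ℕ∞ :=
  ⨆ φ : V → Fin r, fixCost G φ

/-- The fixing number of `G` : sup of the `r`-fixing numbers over `r ≥ χ(G)`. -/
noncomputable def fixingNumber {V : Type*} (G : SimpleGraph V) : ℕ∞ :=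
  ⨆ (r : ℕ) (_ : G.chromaticNumber ≤ (r : ℕ∞)), fixNum G r

lemma fixNum_succ_le {V : Type*} [Fintype V] (G : SimpleGraph V) (r : ℕ) (hr : 0 < r) :
    fixNum G (r + 1) ≤ fixNum G r := by
  apply iSup_le
  intro φ
  set φ' : V → Fin r := fun v => if h : (φ v : ℕ) < r then ⟨φ v, h⟩ else ⟨0, hr⟩ with hφ'
  refine le_trans ?_ (le_iSup (fun ψ => fixCost G ψ) φ')
  apply le_sInf
  rintro d ⟨ψ', hψ', rfl⟩
  set ψ : V → Fin (r + 1) := fun v =>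
    if (φ v : ℕ) = r ∧ (ψ' v : ℕ) = 0 then Fin.last r else (ψ' v).castSucc with hψ
  have hproper : IsProperColoring G ψ := by
    intro u v huv heq
    simp only [hψ] at heq
    by_cases hu : (φ u : ℕ) = r ∧ (ψ' u : ℕ) = 0 <;>
      by_cases hv : (φ v : ℕ) = r ∧ (ψ' v : ℕ) = 0 <;>
      simp [hu, hv] at heq
    · exact hψ' huv (Fin.ext (hu.2.trans hv.2.symm))
    · exact absurd (congrArg Fin.val heq) (by simp [Fin.last]; omega)
    · exact hψ' huv heq
  have hsub : {v | φ v ≠ ψ v} ⊆ {v | φ' v ≠ ψ' v} := by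
    intro v hv
    simp only [Set.mem_setOf_eq] at hv ⊢
    intro heq
    apply hv
    by_cases h : (φ v : ℕ) < r
    · have h1 : (φ' v : ℕ) = (φ v : ℕ) := by simp [hφ', h]
      have h2 : (ψ' v : ℕ) = (φ v : ℕ) := by rw [← heq]; exact h1
      have hcond : ¬((φ v : ℕ) = r ∧ (ψ' v : ℕ) = 0) := by omega
      simp only [hψ, hcond, if_false]
      exact Fin.ext (by simp [h2])
    · have hle : (φ v : ℕ) = r := by have := (φ v).isLt; omega
      have h1 : (φ' v : ℕ) = 0 := by simp [hφ', h]
      have h2 : (ψ' v : ℕ) = 0 := by rw [← heq]; exact h1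
      simp only [hψ, hle, h2, and_self, if_true]
      exact Fin.ext (by simp [hle, Fin.last])
  calc sInf {d : ℕ∞ | ∃ χ : V → Fin (r + 1),
        IsProperColoring G χ ∧ (colDist φ χ : ℕ∞) = d}
      ≤ (colDist φ ψ : ℕ∞) := sInf_le ⟨ψ, hproper, rfl⟩
    _ ≤ (colDist φ' ψ' : ℕ∞) :=
        Nat.cast_le.mpr (Set.ncard_le_ncard hsub (Set.toFinite _))

lemma fixNum_le_of_le {V : Type*} [Fintype V] (G : SimpleGraph V) {c r : ℕ}
    (hc : 0 < c) (h : c ≤ r) : fixNum G r ≤ fixNum G c := by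
  induction r, h using Nat.le_induction with
  | base => exact le_refl _
  | succ n hn ih => exact le_trans (fixNum_succ_le G n (lt_of_lt_of_le hc hn)) ih

lemma fixNum_of_isEmpty {V : Type*} [Fintype V] [IsEmpty V] (G : SimpleGraph V) (r : ℕ) :
    fixNum G r = 0 := by
  apply le_antisymm _ (zero_le)
  apply iSup_le
  intro φ
  have : (colDist φ φ : ℕ∞) = 0 := by
    simp [colDist, Set.ncard_eq_zero]
  refine le_trans (sInf_le ⟨φ, fun u v h => (IsEmpty.false u).elim, rfl⟩) (le_of_eq this)

/-- The fixing number of G equals its χ(G)-fixing number. -/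
theorem fixingNumber_eq_fixNum_chromatic {V : Type*} [Fintype V] (G : SimpleGraph V)
    (c : ℕ) (hc : G.chromaticNumber = (c : ℕ∞)) :
    fixingNumber G = fixNum G c := by
  have hmem : G.chromaticNumber ≤ (c : ℕ∞) := le_of_eq hc
  apply le_antisymm
  · apply iSup_le
    intro r
    apply iSup_le
    intro hr
    rcases isEmpty_or_nonempty V with hV | hV
    · rw [fixNum_of_isEmpty, fixNum_of_isEmpty]
    · have hcpos : 0 < c := by
        by_contra h
        have hc0 : c = 0 := by omega
        have : G.Colorable 0 := by
          rw [← SimpleGraph.chromaticNumber_le_iff_colorable, hc]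
          simp [hc0]
        exact (this.some (Classical.arbitrary V)).elim0
      have hcr : c ≤ r := by
        rw [hc] at hr
        exact_mod_cast hr
      exact fixNum_le_of_le G hcpos hcr
  · exact le_trans (le_iSup (fun _ : G.chromaticNumber ≤ (c : ℕ∞) => fixNum G c) hmem)
      (le_iSup (fun r : ℕ => ⨆ (_ : G.chromaticNumber ≤ (r : ℕ∞)), fixNum G r) c)
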